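/- Let p, q > 0 and let X and Y be independent real random variables, where X is Gamma distributed with shape p and rate p and Y is Gamma distributed with shape q and rate q. Then for every x ≥ 0, ℙ(X ≤ x·Y) = B_{p,q}(p·x/(p·x + q)), i.e. ℙ(X ≤ x·Y) = (Γ(p+q)/(Γ(p)·Γ(q)))·∫_0^{px/(px+q)} t^{p−1}·(1−t)^{q−1} dt. -/

import Mathlib

open MeasureTheory ProbabilityTheory
open Real Set
open scoped ENNReal


lemma aux_int_gamma {a r : ℝ} (ha : 0 < a) (hr : 0 < r) :
    IntegrableOn (fun y : ℝ => y ^ (a - 1) * Real.exp (-(r * y))) (Set.Ioi 0) := by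
  have h0 := Real.GammaIntegral_convergent ha
  have h1 : IntegrableOn (fun y : ℝ => Real.exp (-(r * y)) * (r * y) ^ (a - 1)) (Set.Ioi 0) := by
    have := (integrableOn_Ioi_comp_mul_left_iff
      (fun t : ℝ => Real.exp (-t) * t ^ (a - 1)) 0 hr).mpr (by simpa using h0)
    simpa using this
  have h2 := h1.const_mul ((r : ℝ) ^ (a - 1))⁻¹
  apply MeasureTheory.IntegrableOn.congr_fun h2 ?_ measurableSet_Ioi
  intro y hy
  have hy' : (0 : ℝ) < y := hy
  simp only
  rw [Real.mul_rpow hr.le hy'.le]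
  field_simp [(Real.rpow_pos_of_pos hr (a-1)).ne']

lemma aux_lint_gamma {a r : ℝ} (ha : 0 < a) (hr : 0 < r) :
    ∫⁻ y in Set.Ioi 0, ENNReal.ofReal (y ^ (a - 1) * Real.exp (-(r * y)))
      = ENNReal.ofReal ((1 / r) ^ a * Real.Gamma a) := by
  rw [← MeasureTheory.ofReal_integral_eq_lintegral_ofReal (aux_int_gamma ha hr) ?_]
  · rw [integral_rpow_mul_exp_neg_mul_Ioi ha hr]
  · filter_upwards [ae_restrict_mem measurableSet_Ioi] with y hy
    have : (0:ℝ) < y := hy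
    positivity

lemma aux_scale {y x : ℝ} (hy : 0 < y) (f : ℝ → ℝ≥0∞) (hf : Measurable f) :
    ∫⁻ s in Set.Iic (x * y), f s = ENNReal.ofReal y * ∫⁻ u in Set.Iic x, f (y * u) := by
  have hpre : (fun u : ℝ => y * u) ⁻¹' (Set.Iic (x * y)) = Set.Iic x := by
    ext u
    simp only [Set.mem_preimage, Set.mem_Iic]
    rw [mul_comm x y]
    exact mul_le_mul_iff_right₀ hy
  have hmap : Measure.map (fun u : ℝ => y * u) (volume.restrict (Set.Iic x))
      = ENNReal.ofReal y⁻¹ • volume.restrict (Set.Iic (x * y)) := by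
    rw [← hpre, ← Measure.restrict_map (measurable_const_mul y) measurableSet_Iic,
      Real.map_volume_mul_left hy.ne']
    rw [abs_of_pos (inv_pos.mpr hy), Measure.restrict_smul]
  have h2 : ∫⁻ u in Set.Iic x, f (y * u)
      = ENNReal.ofReal y⁻¹ * ∫⁻ s in Set.Iic (x * y), f s := by
    rw [← lintegral_map hf (measurable_const_mul y), hmap, lintegral_smul_measure, smul_eq_mul]
  rw [h2, ← mul_assoc, ← ENNReal.ofReal_mul hy.le, mul_inv_cancel₀ hy.ne',
    ENNReal.ofReal_one, one_mul]

lemma aux_alg {p q u : ℝ} (hp : 0 < p) (hq : 0 < q) (hu : 0 < u) :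
    p * q / (p * u + q) ^ 2 *
        ((p * u / (p * u + q)) ^ (p - 1) * (1 - p * u / (p * u + q)) ^ (q - 1))
      = p ^ p * q ^ q * (u ^ (p - 1) * (p * u + q) ^ (-(p + q))) := by
  have hd : 0 < p * u + q := by positivity
  have h1 : 1 - p * u / (p * u + q) = q / (p * u + q) := by field_simp; ring
  rw [h1, Real.div_rpow (by positivity) hd.le, Real.div_rpow hq.le hd.le,
    Real.mul_rpow hp.le hu.le]
  have hpp : p ^ p = p ^ (p - 1) * p := by
    rw [← Real.rpow_add_one hp.ne' (p - 1)]; ring_nf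
  have hqq : q ^ q = q ^ (q - 1) * q := by
    rw [← Real.rpow_add_one hq.ne' (q - 1)]; ring_nf
  have hden : (p * u + q) ^ (p - 1) * (p * u + q) ^ (q - 1) * (p * u + q) ^ (2 : ℕ)
      = (p * u + q) ^ (p + q) := by
    rw [← Real.rpow_add hd, ← Real.rpow_natCast (p * u + q) 2, ← Real.rpow_add hd]
    congr 1
    push_cast
    ring
  have hden' : (p * u + q) ^ (-(p + q)) = ((p * u + q) ^ (p + q))⁻¹ :=
    Real.rpow_neg hd.le _
  rw [hpp, hqq, hden', ← hden]
  have n1 : (p * u + q) ^ (p - 1) ≠ 0 := (Real.rpow_pos_of_pos hd _).ne'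
  have n2 : (p * u + q) ^ (q - 1) ≠ 0 := (Real.rpow_pos_of_pos hd _).ne'
  field_simp

lemma aux_int_sing {e : ℝ} (he : 0 < e) {b M : ℝ} (g : ℝ → ℝ) (hg : Measurable g)
    (hbd : ∀ t ∈ Set.Ioc (0:ℝ) b, |g t| ≤ M) :
    IntegrableOn (fun t : ℝ => t ^ (e - 1) * g t) (Set.Ioc 0 b) := by
  have hdom : IntegrableOn (fun t : ℝ => M * t ^ (e - 1)) (Set.Ioc 0 b) := by
    rcases le_or_gt b 0 with hb | hb
    · rw [Set.Ioc_eq_empty_of_le hb]; simp [IntegrableOn]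
    · have := intervalIntegral.intervalIntegrable_rpow' (a := 0) (b := b) (r := e - 1)
        (by linarith)
      rw [intervalIntegrable_iff, Set.uIoc_of_le hb.le] at this
      exact this.const_mul M
  refine Integrable.mono' hdom ?_ ?_
  · exact (((by fun_prop : Measurable fun t : ℝ => t ^ (e-1))).mul hg).aestronglyMeasurable
  · filter_upwards [ae_restrict_mem measurableSet_Ioc] with t ht
    have ht0 : 0 < t := ht.1
    rw [Real.norm_eq_abs, abs_mul, abs_of_nonneg (Real.rpow_nonneg ht0.le _)]
    calc t ^ (e - 1) * |g t| ≤ t ^ (e - 1) * M :=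
          mul_le_mul_of_nonneg_left (hbd t ht) (Real.rpow_nonneg ht0.le _)
      _ = M * t ^ (e - 1) := mul_comm _ _

lemma aux_int_g {p q T : ℝ} (hp : 0 < p) (hq : 0 < q) (hT0 : 0 ≤ T) (hT1 : T < 1) :
    IntegrableOn (fun t : ℝ => t ^ (p - 1) * (1 - t) ^ (q - 1)) (Set.Icc 0 T) := by
  rw [integrableOn_Icc_iff_integrableOn_Ioc]
  refine aux_int_sing (M := max 1 ((1 - T) ^ (q - 1))) hp _ (by fun_prop : Measurable fun t : ℝ => (1-t) ^ (q-1)) ?_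
  intro t ht
  have h1t : 0 < 1 - t := by linarith [ht.2, hT1]
  rw [abs_of_nonneg (Real.rpow_nonneg h1t.le _)]
  rcases le_or_gt 1 q with hq1 | hq1
  · calc (1 - t) ^ (q - 1) ≤ 1 := Real.rpow_le_one h1t.le (by linarith [ht.1]) (by linarith)
      _ ≤ max 1 ((1 - T) ^ (q - 1)) := le_max_left _ _
  · calc (1 - t) ^ (q - 1) ≤ (1 - T) ^ (q - 1) :=
        Real.rpow_le_rpow_of_nonpos (by linarith) (by linarith [ht.2]) (by linarith)
      _ ≤ max 1 ((1 - T) ^ (q - 1)) := le_max_right _ _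

lemma aux_int_h {p q x : ℝ} (hp : 0 < p) (hq : 0 < q) :
    IntegrableOn (fun u : ℝ => u ^ (p - 1) * (p * u + q) ^ (-(p + q))) (Set.Ioc 0 x) := by
  refine aux_int_sing (M := q ^ (-(p+q))) hp _ (by fun_prop : Measurable fun u : ℝ => (p*u+q) ^ (-(p+q))) ?_
  intro u hu
  have hd : 0 < p * u + q := by nlinarith [hu.1]
  rw [abs_of_nonneg (Real.rpow_nonneg hd.le _)]
  calc (p * u + q) ^ (-(p + q)) ≤ q ^ (-(p + q)) :=
      Real.rpow_le_rpow_of_nonpos hq (by nlinarith [hu.1]) (by linarith)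
    _ ≤ q ^ (-(p + q)) := le_rfl

lemma aux_phi_mem {p q x u : ℝ} (hp : 0 < p) (hq : 0 < q) (hu0 : 0 ≤ u) (hux : u ≤ x) :
    p * u / (p * u + q) ∈ Set.Icc 0 (p * x / (p * x + q)) := by
  have hd : 0 < p * u + q := by nlinarith
  have hd' : 0 < p * x + q := by nlinarith
  constructor
  · positivity
  · rw [div_le_div_iff₀ hd hd']
    nlinarith [mul_le_mul_of_nonneg_left hux (by positivity : (0:ℝ) ≤ p * q)]

lemma aux_calc {p q x : ℝ} (hp : 0 < p) (hq : 0 < q) (hx : 0 ≤ x) :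
    ∫ u in Set.Ioc (0:ℝ) x,
        p ^ p * q ^ q / (Real.Gamma p * Real.Gamma q) * Real.Gamma (p + q) *
          (u ^ (p - 1) * (p * u + q) ^ (-(p + q)))
      = Real.Gamma (p + q) / (Real.Gamma p * Real.Gamma q) *
          ∫ t in (0:ℝ)..(p * x / (p * x + q)), t ^ (p - 1) * (1 - t) ^ (q - 1) := by
  set T := p * x / (p * x + q) with hT
  have hdx : 0 < p * x + q := by nlinarith
  have hT0 : 0 ≤ T := by positivity
  have hT1 : T < 1 := by
    rw [hT, div_lt_one hdx]; nlinarith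
  set φ : ℝ → ℝ := fun u => p * u / (p * u + q) with hφ
  set φ' : ℝ → ℝ := fun u => p * q / (p * u + q) ^ 2 with hφ'
  set g : ℝ → ℝ := fun t => t ^ (p - 1) * (1 - t) ^ (q - 1) with hg
  have hmin : min 0 x = 0 := min_eq_left hx
  have hmax : max 0 x = x := max_eq_right hx
  have huIcc : Set.uIcc (0:ℝ) x = Set.Icc 0 x := Set.uIcc_of_le hx
  have hden : ∀ u : ℝ, 0 ≤ u → 0 < p * u + q := fun u hu => by nlinarith
  -- continuity of φ
  have hf : ContinuousOn φ (Set.uIcc 0 x) := by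
    rw [huIcc]
    apply ContinuousOn.div (by fun_prop) (by fun_prop)
    exact fun u hu => (hden u hu.1).ne'
  -- derivative
  have hff' : ∀ u ∈ Set.Ioo (min 0 x) (max 0 x), HasDerivWithinAt φ (φ' u) (Set.Ioi u) u := by
    rw [hmin, hmax]
    intro u hu
    have hd : 0 < p * u + q := hden u hu.1.le
    have h1 : HasDerivAt (fun u : ℝ => p * u) p u := by
      simpa using (hasDerivAt_id u).const_mul p
    have h2 : HasDerivAt (fun u : ℝ => p * u + q) p u := h1.add_const q
    have h3 := h1.div h2 hd.ne'
    have heq : (p * (p * u + q) - p * u * p) / (p * u + q) ^ 2 = φ' u := by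
      rw [hφ']; field_simp; ring
    rw [← heq]
    exact h3.hasDerivWithinAt
  -- continuity of g on the image of the open interval
  have hg_cont : ContinuousOn g (φ '' Set.Ioo (min 0 x) (max 0 x)) := by
    rw [hmin, hmax]
    rintro t ⟨u, hu, rfl⟩
    have hd : 0 < p * u + q := hden u hu.1.le
    have ht0 : 0 < φ u := div_pos (mul_pos hp hu.1) hd
    have ht1 : φ u < 1 := by
      rw [hφ]; simp only
      rw [div_lt_one hd]; nlinarith [hu.1]
    apply ContinuousAt.continuousWithinAt
    apply ContinuousAt.mul
    · exact Real.continuousAt_rpow_const _ _ (Or.inl ht0.ne')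
    · exact (Real.continuousAt_rpow_const _ _ (Or.inl (by linarith : (1:ℝ) - φ u ≠ 0))).comp
        ((continuous_const.sub continuous_id).continuousAt)
  -- integrability of g on the image of the closed interval
  have himg : φ '' Set.uIcc 0 x ⊆ Set.Icc 0 T := by
    rw [huIcc]
    rintro t ⟨u, hu, rfl⟩
    exact aux_phi_mem hp hq hu.1 hu.2
  have hg1 : IntegrableOn g (φ '' Set.uIcc 0 x) :=
    (aux_int_g hp hq hT0 hT1).mono_set himg
  -- integrability of the substituted integrand
  have hg2 : IntegrableOn (fun u => φ' u • (g ∘ φ) u) (Set.uIcc 0 x) := by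
    rw [huIcc, integrableOn_Icc_iff_integrableOn_Ioc]
    have base := (aux_int_h (x := x) hp hq).const_mul (p ^ p * q ^ q)
    refine base.congr ?_
    filter_upwards [ae_restrict_mem measurableSet_Ioc] with u hu
    have := aux_alg hp hq hu.1
    simp only [Function.comp, hφ, hφ', hg, smul_eq_mul]
    rw [← this]
  have hsub := intervalIntegral.integral_comp_smul_deriv''' hf hff' hg_cont hg1 hg2
  have hφ0 : φ 0 = 0 := by rw [hφ]; simp
  have hφx : φ x = T := rfl
  rw [hφ0, hφx] at hsub
  rw [← intervalIntegral.integral_of_le hx]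
  have hcong : (∫ u in (0:ℝ)..x,
      p ^ p * q ^ q / (Real.Gamma p * Real.Gamma q) * Real.Gamma (p + q) *
        (u ^ (p - 1) * (p * u + q) ^ (-(p + q))))
      = ∫ u in (0:ℝ)..x,
          Real.Gamma (p + q) / (Real.Gamma p * Real.Gamma q) * (φ' u • (g ∘ φ) u) := by
    apply intervalIntegral.integral_congr_ae
    filter_upwards with u hu
    rw [Set.uIoc_of_le hx] at hu
    have halg := aux_alg hp hq hu.1
    simp only [Function.comp, hφ, hφ', hg, smul_eq_mul]
    rw [halg]; ring
  rw [hcong, intervalIntegral.integral_const_mul, hsub]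

lemma aux_inner {p q u : ℝ} (hp : 0 < p) (hq : 0 < q) (hu : 0 < u) :
    ∫⁻ y in Set.Ioi (0:ℝ), ENNReal.ofReal y * gammaPDF q q y * gammaPDF p p (y * u)
      = ENNReal.ofReal (p ^ p * q ^ q / (Real.Gamma p * Real.Gamma q) * Real.Gamma (p + q) *
          (u ^ (p - 1) * (p * u + q) ^ (-(p + q)))) := by
  have hd : 0 < p * u + q := by positivity
  have hGp : 0 < Real.Gamma p := Real.Gamma_pos_of_pos hp
  have hGq : 0 < Real.Gamma q := Real.Gamma_pos_of_pos hq
  have hc : (0:ℝ) ≤ p ^ p * q ^ q / (Real.Gamma p * Real.Gamma q) * u ^ (p - 1) := by positivity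
  have step1 : ∀ y ∈ Set.Ioi (0:ℝ), ENNReal.ofReal y * gammaPDF q q y * gammaPDF p p (y * u)
      = ENNReal.ofReal ((p ^ p * q ^ q / (Real.Gamma p * Real.Gamma q) * u ^ (p - 1)) *
          (y ^ (p + q - 1) * Real.exp (-((p * u + q) * y)))) := by
    intro y hy
    have hy' : (0:ℝ) < y := hy
    rw [gammaPDF_of_nonneg hy'.le, gammaPDF_of_nonneg (by positivity : (0:ℝ) ≤ y * u),
      ← ENNReal.ofReal_mul hy'.le, ← ENNReal.ofReal_mul (by positivity)]
    congr 1
    have hyy : y ^ (p + q - 1) = y ^ (q - 1) * y ^ (p - 1) * y := by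
      rw [← Real.rpow_add hy', ← Real.rpow_add_one hy'.ne']; ring_nf
    have hexp : Real.exp (-((p * u + q) * y)) = Real.exp (-(q * y)) * Real.exp (-(p * (y * u))) := by
      rw [← Real.exp_add]; ring_nf
    rw [hyy, hexp, Real.mul_rpow hy'.le hu.le]
    ring
  rw [setLIntegral_congr_fun measurableSet_Ioi step1]
  simp_rw [ENNReal.ofReal_mul hc]
  rw [lintegral_const_mul _ (Measurable.ennreal_ofReal (by fun_prop)),
    show (p + q - 1) = (p + q) - 1 by ring, aux_lint_gamma (by linarith) hd,
    ← ENNReal.ofReal_mul hc]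
  congr 1
  rw [one_div, Real.inv_rpow hd.le, ← Real.rpow_neg hd.le]
  ring


/-- Nakagami-(p,q) fading ratio cdf: if `X ~ Gamma(p, rate p)` and `Y ~ Gamma(q, rate q)` are
independent, then `ℙ(X ≤ x·Y) = B_{p,q}(px/(px+q))`, the regularized incomplete beta
function. -/
theorem stmt_5 {Ω : Type*} [MeasurableSpace Ω] (P : Measure Ω) [IsProbabilityMeasure P]
    (p q : ℝ) (hp : 0 < p) (hq : 0 < q) (X Y : Ω → ℝ)
    (hX : Measurable X) (hY : Measurable Y)
    (hXY : IndepFun X Y P)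
    (hXlaw : Measure.map X P = gammaMeasure p p)
    (hYlaw : Measure.map Y P = gammaMeasure q q) :
    ∀ x : ℝ, 0 ≤ x →
      (P {ω | X ω ≤ x * Y ω}).toReal =
        Real.Gamma (p + q) / (Real.Gamma p * Real.Gamma q) *
          ∫ t in (0 : ℝ)..(p * x / (p * x + q)), t ^ (p - 1) * (1 - t) ^ (q - 1) := by
  intro x hx
  have hprobp : IsProbabilityMeasure (gammaMeasure p p) := isProbabilityMeasure_gammaMeasure hp hp
  have hprobq : IsProbabilityMeasure (gammaMeasure q q) := isProbabilityMeasure_gammaMeasure hq hq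
  set μp := gammaMeasure p p with hμp
  set μq := gammaMeasure q q with hμq
  have hpdfp : Measurable (gammaPDF p p) := (measurable_gammaPDFReal p p).ennreal_ofReal
  have hpdfq : Measurable (gammaPDF q q) := (measurable_gammaPDFReal q q).ennreal_ofReal
  have hS : MeasurableSet {z : ℝ × ℝ | z.1 ≤ x * z.2} :=
    measurableSet_le measurable_fst (measurable_snd.const_mul x)
  have h1 : P {ω | X ω ≤ x * Y ω} = (μp.prod μq) {z : ℝ × ℝ | z.1 ≤ x * z.2} := by
    have hmap := (indepFun_iff_map_prod_eq_prod_map_map hX.aemeasurable hY.aemeasurable).mp hXY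
    rw [hXlaw, hYlaw] at hmap
    rw [← hmap, Measure.map_apply (hX.prodMk hY) hS]
    rfl
  have h2 : (μp.prod μq) {z : ℝ × ℝ | z.1 ≤ x * z.2}
      = ∫⁻ y, μp (Set.Iic (x * y)) ∂μq := by
    rw [← Measure.prod_swap, Measure.map_apply measurable_swap hS,
      Measure.prod_apply (hS.preimage measurable_swap)]
    apply lintegral_congr
    intro y
    congr 1
  have hmeas1 : Measurable fun y : ℝ => μp (Set.Iic (x * y)) := by
    apply Monotone.measurable
    intro y y' hyy
    exact measure_mono (Set.Iic_subset_Iic.mpr (mul_le_mul_of_nonneg_left hyy hx))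
  have h3 : ∫⁻ y, μp (Set.Iic (x * y)) ∂μq
      = ∫⁻ y, gammaPDF q q y * μp (Set.Iic (x * y)) := by
    rw [hμq, gammaMeasure, lintegral_withDensity_eq_lintegral_mul _ hpdfq hmeas1]
    rfl
  have h4 : ∫⁻ y, gammaPDF q q y * μp (Set.Iic (x * y))
      = ∫⁻ y in Set.Ioi 0, gammaPDF q q y * μp (Set.Iic (x * y)) := by
    rw [← lintegral_add_compl (fun y => gammaPDF q q y * μp (Set.Iic (x * y)))
      measurableSet_Ioi, compl_Ioi]
    have hz : ∫⁻ y in Set.Iic (0:ℝ), gammaPDF q q y * μp (Set.Iic (x * y)) = 0 := by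
      rw [← setLIntegral_congr Iio_ae_eq_Iic,
        setLIntegral_congr_fun measurableSet_Iio
          (fun y (hy : y < 0) => by rw [gammaPDF_of_neg hy, zero_mul]),
        lintegral_zero]
    rw [hz, add_zero]
  have h5 : ∀ y ∈ Set.Ioi (0:ℝ), gammaPDF q q y * μp (Set.Iic (x * y))
      = ∫⁻ u in Set.Iic x, ENNReal.ofReal y * gammaPDF q q y * gammaPDF p p (y * u) := by
    intro y hy
    have hy' : (0:ℝ) < y := hy
    rw [hμp, gammaMeasure, withDensity_apply _ measurableSet_Iic, aux_scale hy' _ hpdfp]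
    calc gammaPDF q q y * (ENNReal.ofReal y * ∫⁻ u in Set.Iic x, gammaPDF p p (y * u))
        = ENNReal.ofReal y * gammaPDF q q y * ∫⁻ u in Set.Iic x, gammaPDF p p (y * u) := by
          ring
      _ = ∫⁻ u in Set.Iic x, ENNReal.ofReal y * gammaPDF q q y * gammaPDF p p (y * u) :=
          (lintegral_const_mul _ (hpdfp.comp (measurable_const_mul y))).symm
  have h6 : ∫⁻ y in Set.Ioi (0:ℝ), ∫⁻ u in Set.Iic x,
        ENNReal.ofReal y * gammaPDF q q y * gammaPDF p p (y * u)
      = ∫⁻ u in Set.Iic x, ∫⁻ y in Set.Ioi (0:ℝ),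
        ENNReal.ofReal y * gammaPDF q q y * gammaPDF p p (y * u) := by
    apply lintegral_lintegral_swap
    apply Measurable.aemeasurable
    exact ((measurable_fst.ennreal_ofReal.mul (hpdfq.comp measurable_fst)).mul
      (hpdfp.comp (measurable_fst.mul measurable_snd)))
  have h7 : ∫⁻ u in Set.Iic x, ∫⁻ y in Set.Ioi (0:ℝ),
        ENNReal.ofReal y * gammaPDF q q y * gammaPDF p p (y * u)
      = ∫⁻ u in Set.Ioc 0 x, ∫⁻ y in Set.Ioi (0:ℝ),
        ENNReal.ofReal y * gammaPDF q q y * gammaPDF p p (y * u) := by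
    rw [lintegral_Iic_eq_lintegral_Iio_add_Icc _ hx]
    have hIio : ∫⁻ u in Set.Iio (0:ℝ), ∫⁻ y in Set.Ioi (0:ℝ),
        ENNReal.ofReal y * gammaPDF q q y * gammaPDF p p (y * u) = 0 := by
      rw [setLIntegral_congr_fun measurableSet_Iio
        (fun u (hu : u < 0) => ?_), lintegral_zero]
      rw [setLIntegral_congr_fun measurableSet_Ioi
        (fun y (hy : (0:ℝ) < y) => ?_), lintegral_zero]
      rw [gammaPDF_of_neg (mul_neg_of_pos_of_neg hy hu), mul_zero]
    rw [hIio, zero_add]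
    exact (setLIntegral_congr (Ioc_ae_eq_Icc (α := ℝ) (a := 0) (b := x))).symm
  have h8 : ∫⁻ u in Set.Ioc (0:ℝ) x, ∫⁻ y in Set.Ioi (0:ℝ),
        ENNReal.ofReal y * gammaPDF q q y * gammaPDF p p (y * u)
      = ∫⁻ u in Set.Ioc (0:ℝ) x,
          ENNReal.ofReal (p ^ p * q ^ q / (Real.Gamma p * Real.Gamma q) * Real.Gamma (p + q) *
            (u ^ (p - 1) * (p * u + q) ^ (-(p + q)))) :=
    setLIntegral_congr_fun measurableSet_Ioc
      (fun u hu => aux_inner hp hq hu.1)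
  have h9 : (∫⁻ u in Set.Ioc (0:ℝ) x,
      ENNReal.ofReal (p ^ p * q ^ q / (Real.Gamma p * Real.Gamma q) * Real.Gamma (p + q) *
        (u ^ (p - 1) * (p * u + q) ^ (-(p + q))))).toReal
      = ∫ u in Set.Ioc (0:ℝ) x,
          p ^ p * q ^ q / (Real.Gamma p * Real.Gamma q) * Real.Gamma (p + q) *
            (u ^ (p - 1) * (p * u + q) ^ (-(p + q))) := by
    rw [integral_eq_lintegral_of_nonneg_ae ?_ ?_]
    · filter_upwards [ae_restrict_mem measurableSet_Ioc] with u hu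
      have hu0 : (0:ℝ) < u := hu.1
      have hd : (0:ℝ) < p * u + q := by positivity
      have hGp : 0 < Real.Gamma p := Real.Gamma_pos_of_pos hp
      have hGq : 0 < Real.Gamma q := Real.Gamma_pos_of_pos hq
      have hGpq : 0 < Real.Gamma (p + q) := Real.Gamma_pos_of_pos (by linarith)
      positivity
    · exact (by fun_prop : Measurable fun u : ℝ =>
        p ^ p * q ^ q / (Real.Gamma p * Real.Gamma q) * Real.Gamma (p + q) *
          (u ^ (p - 1) * (p * u + q) ^ (-(p + q)))).aestronglyMeasurable
  rw [h1, h2, h3, h4, setLIntegral_congr_fun measurableSet_Ioi h5, h6, h7, h8,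
    h9, aux_calc hp hq hx]
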